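/- Let τ, κ be involutions in Σ_N with no common proper nonempty invariant subset of {1,…,N}, and suppose some point p₁ is moved by τ and fixed by κ, with N ≥ 2 even. Then there is an enumeration p₁,…,p_N of {1,…,N} with τ = (p₁p₂)(p₃p₄)⋯(p_{N−1}p_N) and κ = (p₂p₃)(p₄p₅)⋯(p_{N−2}p_{N−1}); in particular τ has N/2 transpositions and κ has N/2 − 1 transpositions. -/
import Mathlib


open Equiv Finset

def Ssign {N : ℕ} (σ τ : Equiv.Perm (Fin N)) : ℤ :=
  (-1) ^ (Finset.univ.filter (fun p : Fin N × Fin N =>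
      p.1 < p.2 ∧ τ p.1 = p.2 ∧ σ p.2 < σ p.1)).card


/-- H is invariant under a permutation π. -/
def InvSet {N : ℕ} (π : Equiv.Perm (Fin N)) (H : Finset (Fin N)) : Prop :=
  ∀ a ∈ H, π a ∈ H

/-- No proper nonempty subset of {1,…,N} is invariant under both τ and κ. -/
def NoCommonInvariant {N : ℕ} (τ κ : Equiv.Perm (Fin N)) : Prop :=
  ∀ H : Finset (Fin N), H.Nonempty → H ≠ Finset.univ → ¬ (InvSet τ H ∧ InvSet κ H)

open Equiv Finset

namespace CaseIAux

lemma prod_ofFn_fixed {α : Type*} {n : ℕ} (f : Fin n → Equiv.Perm α) (x : α)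
    (h : ∀ i, f i x = x) : (List.ofFn f).prod x = x := by
  induction n with
  | zero => simp
  | succ n ih =>
      rw [List.ofFn_succ, List.prod_cons, Equiv.Perm.mul_apply,
        ih (fun i => f i.succ) (fun i => h i.succ), h 0]

lemma prod_ofFn_single {α : Type*} {n : ℕ} (f : Fin n → Equiv.Perm α) (x : α)
    (k : Fin n) (hx : ∀ i, i ≠ k → f i x = x)
    (hy : ∀ i, i ≠ k → f i (f k x) = f k x) :
    (List.ofFn f).prod x = f k x := by
  induction n with
  | zero => exact absurd k.2 (by omega)
  | succ n ih =>
      rw [List.ofFn_succ, List.prod_cons, Equiv.Perm.mul_apply]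
      rcases Fin.eq_zero_or_eq_succ k with hk | ⟨j, hk⟩
      · subst hk
        rw [prod_ofFn_fixed (fun i => f i.succ) x
          (fun i => hx i.succ (Fin.succ_ne_zero i))]
      · subst hk
        rw [ih (fun i => f i.succ) j
          (fun i hi => hx i.succ (by simpa using hi))
          (fun i hi => hy i.succ (by simpa using hi)),
          hy 0 (Fin.succ_ne_zero j).symm]

variable {N : ℕ}

def chain (τ κ : Equiv.Perm (Fin N)) (p₁ : Fin N) : ℕ → Fin N
  | 0 => p₁
  | n+1 => if n % 2 = 0 then τ (chain τ κ p₁ n) else κ (chain τ κ p₁ n)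

variable (τ κ : Equiv.Perm (Fin N)) (p₁ : Fin N)

lemma chain_succ_even {n : ℕ} (hn : n % 2 = 0) :
    chain τ κ p₁ (n+1) = τ (chain τ κ p₁ n) := by simp [chain, hn]

lemma chain_succ_odd {n : ℕ} (hn : n % 2 = 1) :
    chain τ κ p₁ (n+1) = κ (chain τ κ p₁ n) := by
  simp [chain, Nat.mod_two_ne_zero.mpr hn, hn]

variable (hτ2 : ∀ x, τ (τ x) = x) (hκ2 : ∀ x, κ (κ x) = x)

include hτ2 in
lemma chain_back_even {n : ℕ} (hn : n % 2 = 0) :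
    τ (chain τ κ p₁ (n+1)) = chain τ κ p₁ n := by
  rw [chain_succ_even τ κ p₁ hn, hτ2]

include hκ2 in
lemma chain_back_odd {n : ℕ} (hn : n % 2 = 1) :
    κ (chain τ κ p₁ (n+1)) = chain τ κ p₁ n := by
  rw [chain_succ_odd τ κ p₁ hn, hκ2]

include hτ2 hκ2 in
lemma chain_nodup (hfixed : κ p₁ = p₁) :
    ∀ j, (∀ k < j, chain τ κ p₁ (k+1) ≠ chain τ κ p₁ k) →
      ∀ i < j, chain τ κ p₁ i ≠ chain τ κ p₁ j := by
  intro j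
  induction j using Nat.strong_induction_on with
  | _ j IH =>
    intro hhalt i hij heq
    obtain ⟨j', rfl⟩ : ∃ j'', j = j'' + 1 := ⟨j - 1, by omega⟩
    by_cases hpar : i % 2 = j' % 2
    · rcases eq_or_lt_of_le (Nat.lt_succ_iff.mp hij) with h | h
      · exact hhalt i (by omega) (h ▸ heq.symm)
      · have key : chain τ κ p₁ (i+1) = chain τ κ p₁ j' := by
          rcases Nat.mod_two_eq_zero_or_one i with hi | hi
          · rw [chain_succ_even τ κ p₁ hi, heq,
              chain_back_even τ κ p₁ hτ2 (hpar ▸ hi)]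
          · rw [chain_succ_odd τ κ p₁ hi, heq,
              chain_back_odd τ κ p₁ hκ2 (hpar ▸ hi)]
        have hne : i + 1 ≠ j' := by rintro rfl; omega
        exact IH j' (by omega) (fun k hk => hhalt k (by omega)) (i+1)
          (by omega) key
    · rcases Nat.eq_zero_or_pos i with rfl | hi0
      · have hj' : j' % 2 = 1 := by omega
        have key : chain τ κ p₁ 0 = chain τ κ p₁ j' := by
          have h1 := chain_back_odd τ κ p₁ hκ2 hj'
          rw [← heq] at h1
          have h0 : κ (chain τ κ p₁ 0) = chain τ κ p₁ 0 := hfixed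
          rw [h0] at h1
          exact h1
        have hj'0 : 0 < j' := by omega
        exact IH j' (by omega) (fun k hk => hhalt k (by omega)) 0 hj'0 key
      · obtain ⟨i'', rfl⟩ : ∃ i'', i = i'' + 1 := ⟨i - 1, by omega⟩
        have hpar' : i'' % 2 = j' % 2 := by omega
        have key : chain τ κ p₁ i'' = chain τ κ p₁ j' := by
          rcases Nat.mod_two_eq_zero_or_one i'' with hi | hi
          · rw [← chain_back_even τ κ p₁ hτ2 hi, heq,
              chain_back_even τ κ p₁ hτ2 (hpar' ▸ hi)]
          · rw [← chain_back_odd τ κ p₁ hκ2 hi, heq,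
              chain_back_odd τ κ p₁ hκ2 (hpar' ▸ hi)]
        exact IH j' (by omega) (fun k hk => hhalt k (by omega)) i''
          (by omega) key

include hτ2 hκ2 in
lemma chain_halt (hfixed : κ p₁ = p₁) :
    ∃ k, chain τ κ p₁ (k+1) = chain τ κ p₁ k := by
  by_contra h
  push_neg at h
  have hinj : Function.Injective (fun i : Fin (N+1) => chain τ κ p₁ i.1) := by
    intro a b hab
    rcases lt_trichotomy a.1 b.1 with hl | he | hl
    · exact absurd hab
        (chain_nodup τ κ p₁ hτ2 hκ2 hfixed b.1 (fun k _ => h k) a.1 hl)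
    · exact Fin.ext he
    · exact absurd hab.symm
        (chain_nodup τ κ p₁ hτ2 hκ2 hfixed a.1 (fun k _ => h k) b.1 hl)
  have hcard := Fintype.card_le_of_injective _ hinj
  simp at hcard

end CaseIAux

/-- Case I of Lemma 2: if τ, κ are involutions with no common proper nonempty
invariant subset, N ≥ 2 is even, and some point p₁ is moved by τ but fixed by
κ, then there is an enumeration p₁, p₂, …, p_N of {1,…,N} with
τ = (p₁p₂)(p₃p₄)⋯(p_{N−1}p_N) and κ = (p₂p₃)(p₄p₅)⋯(p_{N−2}p_{N−1}); in
particular τ has N/2 transpositions and κ has N/2 − 1 transpositions. -/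
theorem case_I_structure {N : ℕ} (hN2 : 2 ≤ N) (hNeven : N % 2 = 0)
    (τ κ : Equiv.Perm (Fin N)) (hτ : τ * τ = 1) (hκ : κ * κ = 1)
    (hmin : NoCommonInvariant τ κ)
    (p₁ : Fin N) (hmoved : τ p₁ ≠ p₁) (hfixed : κ p₁ = p₁) :
    ∃ p : Equiv.Perm (Fin N),
      p ⟨0, by omega⟩ = p₁ ∧
      τ = (List.ofFn (fun i : Fin (N / 2) =>
        Equiv.swap (p ⟨2 * i.1, by have := i.2; omega⟩)
          (p ⟨2 * i.1 + 1, by have := i.2; omega⟩))).prod ∧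
      κ = (List.ofFn (fun i : Fin (N / 2 - 1) =>
        Equiv.swap (p ⟨2 * i.1 + 1, by have := i.2; omega⟩)
          (p ⟨2 * i.1 + 2, by have := i.2; omega⟩))).prod ∧
      τ.support.card = 2 * (N / 2) ∧ κ.support.card = 2 * (N / 2 - 1) := by
  classical
  have hτ2 : ∀ x, τ (τ x) = x := fun x => by
    have h := DFunLike.congr_fun hτ x
    simpa [Equiv.Perm.mul_apply] using h
  have hκ2 : ∀ x, κ (κ x) = x := fun x => by
    have h := DFunLike.congr_fun hκ x
    simpa [Equiv.Perm.mul_apply] using h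
  obtain ⟨k₀, hk₀⟩ := CaseIAux.chain_halt τ κ p₁ hτ2 hκ2 hfixed
  have hex : ∃ k, CaseIAux.chain τ κ p₁ (k+1) = CaseIAux.chain τ κ p₁ k := ⟨k₀, hk₀⟩
  set m := Nat.find hex with hmdef
  have hm : CaseIAux.chain τ κ p₁ (m+1) = CaseIAux.chain τ κ p₁ m := Nat.find_spec hex
  have hmmin : ∀ k < m, CaseIAux.chain τ κ p₁ (k+1) ≠ CaseIAux.chain τ κ p₁ k :=
    fun k hk => Nat.find_min hex hk
  have hinjm : ∀ i j, i ≤ m → j ≤ m →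
      CaseIAux.chain τ κ p₁ i = CaseIAux.chain τ κ p₁ j → i = j := by
    intro i j hi hj hij
    rcases lt_trichotomy i j with h | h | h
    · exact absurd hij (CaseIAux.chain_nodup τ κ p₁ hτ2 hκ2 hfixed j
        (fun k hk => hmmin k (by omega)) i h)
    · exact h
    · exact absurd hij.symm (CaseIAux.chain_nodup τ κ p₁ hτ2 hκ2 hfixed i
        (fun k hk => hmmin k (by omega)) j h)
  have hHuniv : (Finset.range (m+1)).image (CaseIAux.chain τ κ p₁) = Finset.univ := by
    by_contra hne
    refine hmin _ ⟨p₁, ?_⟩ hne ⟨?_, ?_⟩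
    · exact Finset.mem_image.mpr ⟨0, Finset.mem_range.mpr (by omega), rfl⟩
    · intro a ha
      simp only [Finset.mem_image, Finset.mem_range, Nat.lt_succ_iff] at ha ⊢
      obtain ⟨i, hi, rfl⟩ := ha
      rcases Nat.mod_two_eq_zero_or_one i with hpar | hpar
      · rcases eq_or_lt_of_le hi with heq | hlt
        · have hm' : CaseIAux.chain τ κ p₁ (i+1) = CaseIAux.chain τ κ p₁ i := by
            rw [heq]; exact hm
          exact ⟨i, le_of_eq heq,
            hm'.symm.trans (CaseIAux.chain_succ_even τ κ p₁ hpar)⟩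
        · exact ⟨i+1, by omega, CaseIAux.chain_succ_even τ κ p₁ hpar⟩
      · obtain ⟨i', rfl⟩ : ∃ t, i = t + 1 := ⟨i-1, by omega⟩
        exact ⟨i', by omega,
          (CaseIAux.chain_back_even τ κ p₁ hτ2 (by omega)).symm⟩
    · intro a ha
      simp only [Finset.mem_image, Finset.mem_range, Nat.lt_succ_iff] at ha ⊢
      obtain ⟨i, hi, rfl⟩ := ha
      rcases Nat.mod_two_eq_zero_or_one i with hpar | hpar
      · rcases Nat.eq_zero_or_pos i with rfl | hi0
        · exact ⟨0, by omega, hfixed.symm⟩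
        · obtain ⟨i', rfl⟩ : ∃ t, i = t + 1 := ⟨i-1, by omega⟩
          exact ⟨i', by omega,
            (CaseIAux.chain_back_odd τ κ p₁ hκ2 (by omega)).symm⟩
      · rcases eq_or_lt_of_le hi with heq | hlt
        · have hm' : CaseIAux.chain τ κ p₁ (i+1) = CaseIAux.chain τ κ p₁ i := by
            rw [heq]; exact hm
          exact ⟨i, le_of_eq heq,
            hm'.symm.trans (CaseIAux.chain_succ_odd τ κ p₁ hpar)⟩
        · exact ⟨i+1, by omega, CaseIAux.chain_succ_odd τ κ p₁ hpar⟩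
  have hcard : m + 1 = N := by
    have h1 := congrArg Finset.card hHuniv
    rwa [Finset.card_image_of_injOn (fun i hi j hj hij => hinjm i j
        (by simp only [Finset.coe_range, Set.mem_Iio] at hi; omega)
        (by simp only [Finset.coe_range, Set.mem_Iio] at hj; omega) hij),
      Finset.card_range, Finset.card_univ, Fintype.card_fin] at h1
  have hqinj : ∀ a b, a < N → b < N →
      CaseIAux.chain τ κ p₁ a = CaseIAux.chain τ κ p₁ b → a = b :=
    fun a b ha hb h => hinjm a b (by omega) (by omega) h
  have hbij : Function.Bijective (fun i : Fin N => CaseIAux.chain τ κ p₁ i.1) := by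
    rw [← Finite.injective_iff_bijective]
    intro a b hab
    exact Fin.ext (hqinj a.1 b.1 a.2 b.2 hab)
  have hsurj : ∀ x : Fin N, ∃ j, ∃ _ : j < N, CaseIAux.chain τ κ p₁ j = x := by
    intro x
    obtain ⟨y, hy⟩ := hbij.2 x
    exact ⟨y.1, y.2, hy⟩
  have hκN1 : κ (CaseIAux.chain τ κ p₁ (N-1)) = CaseIAux.chain τ κ p₁ (N-1) := by
    have h1 := hm
    rw [CaseIAux.chain_succ_odd τ κ p₁ (by omega)] at h1
    rw [show N - 1 = m from by omega]
    exact h1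
  have hfixT : ∀ t, t < N → ∀ i : Fin (N/2), 2*i.1 ≠ t → 2*i.1+1 ≠ t →
      Equiv.swap (CaseIAux.chain τ κ p₁ (2*i.1)) (CaseIAux.chain τ κ p₁ (2*i.1+1))
        (CaseIAux.chain τ κ p₁ t) = CaseIAux.chain τ κ p₁ t := by
    intro t ht i h1 h2
    have hi2 := i.2
    exact Equiv.swap_apply_of_ne_of_ne
      (fun hc => h1 (hqinj _ _ ht (by omega) hc).symm)
      (fun hc => h2 (hqinj _ _ ht (by omega) hc).symm)
  have hfixK : ∀ t, t < N → ∀ i : Fin (N/2-1), 2*i.1+1 ≠ t → 2*i.1+2 ≠ t →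
      Equiv.swap (CaseIAux.chain τ κ p₁ (2*i.1+1)) (CaseIAux.chain τ κ p₁ (2*i.1+2))
        (CaseIAux.chain τ κ p₁ t) = CaseIAux.chain τ κ p₁ t := by
    intro t ht i h1 h2
    have hi2 := i.2
    exact Equiv.swap_apply_of_ne_of_ne
      (fun hc => h1 (hqinj _ _ ht (by omega) hc).symm)
      (fun hc => h2 (hqinj _ _ ht (by omega) hc).symm)
  refine ⟨Equiv.ofBijective _ hbij, rfl, ?_, ?_, ?_, ?_⟩
  · -- τ = product
    refine Equiv.ext fun x => ?_
    show τ x = (List.ofFn (fun i : Fin (N/2) => Equiv.swap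
      (CaseIAux.chain τ κ p₁ (2*i.1)) (CaseIAux.chain τ κ p₁ (2*i.1+1)))).prod x
    obtain ⟨j, hjN, rfl⟩ := hsurj x
    have hk : j / 2 < N / 2 := by omega
    obtain ⟨j', hj'N, hj'half, hτj, hswapk⟩ :
        ∃ j', j' < N ∧ j' / 2 = j / 2 ∧
          τ (CaseIAux.chain τ κ p₁ j) = CaseIAux.chain τ κ p₁ j' ∧
          Equiv.swap (CaseIAux.chain τ κ p₁ (2*(j/2)))
            (CaseIAux.chain τ κ p₁ (2*(j/2)+1))
            (CaseIAux.chain τ κ p₁ j) = CaseIAux.chain τ κ p₁ j' := by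
      rcases Nat.mod_two_eq_zero_or_one j with hj | hj
      · refine ⟨j+1, by omega, by omega,
          (CaseIAux.chain_succ_even τ κ p₁ hj).symm, ?_⟩
        rw [show 2*(j/2) = j from by omega]
        exact Equiv.swap_apply_left _ _
      · obtain ⟨t, rfl⟩ : ∃ t, j = t + 1 := ⟨j-1, by omega⟩
        refine ⟨t, by omega, by omega,
          CaseIAux.chain_back_even τ κ p₁ hτ2 (by omega), ?_⟩
        rw [show 2*((t+1)/2) = t from by omega]
        exact Equiv.swap_apply_right _ _
    have hx : ∀ i : Fin (N/2), i ≠ ⟨j/2, hk⟩ →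
        Equiv.swap (CaseIAux.chain τ κ p₁ (2*i.1)) (CaseIAux.chain τ κ p₁ (2*i.1+1))
          (CaseIAux.chain τ κ p₁ j) = CaseIAux.chain τ κ p₁ j := by
      intro i hi
      have hi' : i.1 ≠ j/2 := fun h => hi (Fin.ext h)
      exact hfixT j hjN i (by omega) (by omega)
    have hy : ∀ i : Fin (N/2), i ≠ ⟨j/2, hk⟩ →
        Equiv.swap (CaseIAux.chain τ κ p₁ (2*i.1)) (CaseIAux.chain τ κ p₁ (2*i.1+1))
          (Equiv.swap (CaseIAux.chain τ κ p₁ (2*(j/2)))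
            (CaseIAux.chain τ κ p₁ (2*(j/2)+1)) (CaseIAux.chain τ κ p₁ j)) =
        Equiv.swap (CaseIAux.chain τ κ p₁ (2*(j/2)))
          (CaseIAux.chain τ κ p₁ (2*(j/2)+1)) (CaseIAux.chain τ κ p₁ j) := by
      intro i hi
      have hi' : i.1 ≠ j/2 := fun h => hi (Fin.ext h)
      rw [hswapk]
      exact hfixT j' hj'N i (by omega) (by omega)
    have hmain := CaseIAux.prod_ofFn_single
      (fun i : Fin (N/2) => Equiv.swap
        (CaseIAux.chain τ κ p₁ (2*i.1)) (CaseIAux.chain τ κ p₁ (2*i.1+1)))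
      (CaseIAux.chain τ κ p₁ j) ⟨j/2, hk⟩ hx hy
    exact hτj.trans (hmain.trans hswapk).symm
  · -- κ = product
    refine Equiv.ext fun x => ?_
    show κ x = (List.ofFn (fun i : Fin (N/2-1) => Equiv.swap
      (CaseIAux.chain τ κ p₁ (2*i.1+1)) (CaseIAux.chain τ κ p₁ (2*i.1+2)))).prod x
    obtain ⟨j, hjN, rfl⟩ := hsurj x
    by_cases hj0 : j = 0
    · subst hj0
      have h1 := CaseIAux.prod_ofFn_fixed
        (fun i : Fin (N/2-1) => Equiv.swap
          (CaseIAux.chain τ κ p₁ (2*i.1+1)) (CaseIAux.chain τ κ p₁ (2*i.1+2)))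
        (CaseIAux.chain τ κ p₁ 0)
        (fun i => hfixK 0 (by omega) i (by omega) (by omega))
      exact (show κ (CaseIAux.chain τ κ p₁ 0) = CaseIAux.chain τ κ p₁ 0 from
        hfixed).trans h1.symm
    by_cases hj1 : j = N - 1
    · subst hj1
      have h1 := CaseIAux.prod_ofFn_fixed
        (fun i : Fin (N/2-1) => Equiv.swap
          (CaseIAux.chain τ κ p₁ (2*i.1+1)) (CaseIAux.chain τ κ p₁ (2*i.1+2)))
        (CaseIAux.chain τ κ p₁ (N-1))
        (fun i => hfixK (N-1) (by omega) i
          (by have := i.2; omega) (by have := i.2; omega))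
      exact hκN1.trans h1.symm
    · have hk : (j-1)/2 < N/2 - 1 := by omega
      obtain ⟨j', hj'1, hj'N, hj'half, hκj, hswapk⟩ :
          ∃ j', 1 ≤ j' ∧ j' < N ∧ (j'-1)/2 = (j-1)/2 ∧
            κ (CaseIAux.chain τ κ p₁ j) = CaseIAux.chain τ κ p₁ j' ∧
            Equiv.swap (CaseIAux.chain τ κ p₁ (2*((j-1)/2)+1))
              (CaseIAux.chain τ κ p₁ (2*((j-1)/2)+2))
              (CaseIAux.chain τ κ p₁ j) = CaseIAux.chain τ κ p₁ j' := by
        rcases Nat.mod_two_eq_zero_or_one j with hj | hj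
        · obtain ⟨t, rfl⟩ : ∃ t, j = t + 1 := ⟨j-1, by omega⟩
          refine ⟨t, by omega, by omega, by omega,
            CaseIAux.chain_back_odd τ κ p₁ hκ2 (by omega), ?_⟩
          rw [show 2*((t+1-1)/2)+1 = t from by omega,
            show 2*((t+1-1)/2)+2 = t+1 from by omega]
          exact Equiv.swap_apply_right _ _
        · refine ⟨j+1, by omega, by omega, by omega,
            (CaseIAux.chain_succ_odd τ κ p₁ hj).symm, ?_⟩
          rw [show 2*((j-1)/2)+1 = j from by omega,
            show 2*((j-1)/2)+2 = j+1 from by omega]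
          exact Equiv.swap_apply_left _ _
      have hx : ∀ i : Fin (N/2-1), i ≠ ⟨(j-1)/2, hk⟩ →
          Equiv.swap (CaseIAux.chain τ κ p₁ (2*i.1+1))
            (CaseIAux.chain τ κ p₁ (2*i.1+2))
            (CaseIAux.chain τ κ p₁ j) = CaseIAux.chain τ κ p₁ j := by
        intro i hi
        have hi' : i.1 ≠ (j-1)/2 := fun h => hi (Fin.ext h)
        exact hfixK j hjN i (by omega) (by omega)
      have hy : ∀ i : Fin (N/2-1), i ≠ ⟨(j-1)/2, hk⟩ →
          Equiv.swap (CaseIAux.chain τ κ p₁ (2*i.1+1))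
            (CaseIAux.chain τ κ p₁ (2*i.1+2))
            (Equiv.swap (CaseIAux.chain τ κ p₁ (2*((j-1)/2)+1))
              (CaseIAux.chain τ κ p₁ (2*((j-1)/2)+2)) (CaseIAux.chain τ κ p₁ j)) =
          Equiv.swap (CaseIAux.chain τ κ p₁ (2*((j-1)/2)+1))
            (CaseIAux.chain τ κ p₁ (2*((j-1)/2)+2)) (CaseIAux.chain τ κ p₁ j) := by
        intro i hi
        have hi' : i.1 ≠ (j-1)/2 := fun h => hi (Fin.ext h)
        rw [hswapk]
        exact hfixK j' hj'N i (by omega) (by omega)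
      have hmain := CaseIAux.prod_ofFn_single
        (fun i : Fin (N/2-1) => Equiv.swap
          (CaseIAux.chain τ κ p₁ (2*i.1+1)) (CaseIAux.chain τ κ p₁ (2*i.1+2)))
        (CaseIAux.chain τ κ p₁ j) ⟨(j-1)/2, hk⟩ hx hy
      exact hκj.trans (hmain.trans hswapk).symm
  · -- τ support
    have hsupT : τ.support = Finset.univ := by
      ext x
      simp only [Equiv.Perm.mem_support, Finset.mem_univ, iff_true]
      obtain ⟨j, hjN, rfl⟩ := hsurj x
      rcases Nat.mod_two_eq_zero_or_one j with hj | hj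
      · rw [← CaseIAux.chain_succ_even τ κ p₁ hj]
        intro hc
        have := hqinj _ _ (by omega) hjN hc; omega
      · obtain ⟨t, rfl⟩ : ∃ t, j = t+1 := ⟨j-1, by omega⟩
        rw [CaseIAux.chain_back_even τ κ p₁ hτ2 (by omega)]
        intro hc
        have := hqinj _ _ (by omega) hjN hc; omega
    rw [hsupT, Finset.card_univ, Fintype.card_fin]
    omega
  · -- κ support
    have hsupK : κ.support =
        ({CaseIAux.chain τ κ p₁ 0, CaseIAux.chain τ κ p₁ (N-1)} : Finset (Fin N))ᶜ := by
      ext x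
      simp only [Equiv.Perm.mem_support, Finset.mem_compl, Finset.mem_insert,
        Finset.mem_singleton]
      obtain ⟨j, hjN, rfl⟩ := hsurj x
      constructor
      · intro hne
        push_neg
        refine ⟨fun hc => hne ?_, fun hc => hne ?_⟩
        · rw [hc]; exact hfixed
        · rw [hc]; exact hκN1
      · intro hor
        push_neg at hor
        obtain ⟨h0, h1⟩ := hor
        have hj0 : j ≠ 0 := fun h => h0 (by rw [h])
        have hj1 : j ≠ N-1 := fun h => h1 (by rw [h])
        rcases Nat.mod_two_eq_zero_or_one j with hj | hj
        · obtain ⟨t, rfl⟩ : ∃ t, j = t+1 := ⟨j-1, by omega⟩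
          rw [CaseIAux.chain_back_odd τ κ p₁ hκ2 (by omega)]
          intro hc
          have := hqinj _ _ (by omega) hjN hc; omega
        · rw [← CaseIAux.chain_succ_odd τ κ p₁ hj]
          intro hc
          have := hqinj _ _ (by omega) hjN hc; omega
    rw [hsupK, Finset.card_compl, Finset.card_insert_of_notMem, Finset.card_singleton,
      Fintype.card_fin]
    · omega
    · simp only [Finset.mem_singleton]
      intro hc
      have := hqinj _ _ (by omega) (by omega) hc
      omega
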